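/- Let $G$ be a finite abelian group and let $H$ be a subgroup of $G$. Then $S(G) \subseteq S(H)$, where $S(G) := \{\Theta_G(x) \mid x : G \to \mathbb{Z}\}$ is the set of integer group determinants of $G$. -/

import Mathlib

open scoped Classical

/-- The group determinant of a finite group `G`: the determinant of the matrix whose
`(g, h)` entry is `x (g * h⁻¹)`. -/
noncomputable def groupDet (G : Type*) [Group G] [Fintype G] {R : Type*} [CommRing R]
    (x : G → R) : R :=
  Matrix.det (Matrix.of fun g h : G => x (g * h⁻¹))

set_option linter.unusedSectionVars false
set_option linter.unusedVariables false
open Matrix Polynomial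

namespace GDaux

variable {R : Type*} [CommRing R] {n : Type*} [Fintype n] [DecidableEq n]

/-- Flatten a matrix of matrices. -/
def bigM {I : Type*} (M : Matrix I I (Matrix n n R)) : Matrix (I × n) (I × n) R :=
  Matrix.of fun p q => M p.1 q.1 p.2 q.2

lemma bigM_apply {I : Type*} (M : Matrix I I (Matrix n n R)) (p q : I × n) :
    bigM M p q = M p.1 q.1 p.2 q.2 := rfl

lemma bigM_mul {I : Type*} [Fintype I] (P Q : Matrix I I (Matrix n n R)) :
    bigM (P * Q) = bigM P * bigM Q := by
  ext ⟨i, k⟩ ⟨j, l⟩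
  simp only [bigM_apply, Matrix.mul_apply, Matrix.sum_apply]
  rw [Fintype.sum_prod_type]




/-- The splitting equivalence. -/
def splitEquiv (m : ℕ) (n : Type*) : n ⊕ (Fin m × n) ≃ (Fin (m + 1) × n) where
  toFun := Sum.elim (fun k => ((0 : Fin (m + 1)), k)) fun p => (p.1.succ, p.2)
  invFun p := Fin.cases (Sum.inl p.2) (fun i => Sum.inr (i, p.2)) p.1
  left_inv := by rintro (k | ⟨i, k⟩) <;> simp
  right_inv := by
    rintro ⟨i, k⟩
    refine Fin.cases ?_ (fun i => ?_) i <;> simp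

lemma det_eq_fromBlocks {m : ℕ} (P : Matrix (Fin (m + 1) × n) (Fin (m + 1) × n) R) :
    P.det = (Matrix.fromBlocks
      (Matrix.of fun (k l : n) => P (0, k) (0, l))
      (Matrix.of fun (k : n) (p : Fin m × n) => P (0, k) (p.1.succ, p.2))
      (Matrix.of fun (p : Fin m × n) (l : n) => P (p.1.succ, p.2) (0, l))
      (Matrix.of fun (p p' : Fin m × n) => P (p.1.succ, p.2) (p'.1.succ, p'.2))).det := by
  have h : (Matrix.fromBlocks
      (Matrix.of fun (k l : n) => P (0, k) (0, l))
      (Matrix.of fun (k : n) (p : Fin m × n) => P (0, k) (p.1.succ, p.2))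
      (Matrix.of fun (p : Fin m × n) (l : n) => P (p.1.succ, p.2) (0, l))
      (Matrix.of fun (p p' : Fin m × n) => P (p.1.succ, p.2) (p'.1.succ, p'.2)))
      = P.submatrix (splitEquiv m n) (splitEquiv m n) := by
    ext (k | ⟨i, k⟩) (l | ⟨j, l⟩) <;> rfl
  rw [h, Matrix.det_submatrix_equiv_self]

lemma det_bigM_lowerTriangular : ∀ (s : ℕ) {R : Type u_1} [CommRing R]
    {n : Type u_2} [Fintype n] [DecidableEq n] {A : Type u_3} [CommRing A]
    (φ : A →+* Matrix n n R) (T : Matrix (Fin s) (Fin s) A)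
    (_ : ∀ i j : Fin s, i < j → T i j = 0),
    (bigM (T.map φ)).det = ∏ i, (φ (T i i)).det := by
  intro s
  induction s with
  | zero =>
    intro R _ n _ _ A _ φ T hT
    simp [Matrix.det_isEmpty]
  | succ m ih =>
    intro R _ n _ _ A _ φ T hT
    rw [det_eq_fromBlocks]
    have hB : (Matrix.of fun (k : n) (p : Fin m × n) => (bigM (T.map φ)) (0, k) (p.1.succ, p.2))
        = (0 : Matrix n (Fin m × n) R) := by
      ext k ⟨j, l⟩
      simp [bigM_apply, hT 0 j.succ (Fin.succ_pos j)]
    have hA : (Matrix.of fun (k l : n) => (bigM (T.map φ)) (0, k) (0, l)) = φ (T 0 0) := by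
      ext k l; rfl
    have hD : (Matrix.of fun (p p' : Fin m × n) => (bigM (T.map φ)) (p.1.succ, p.2)
        (p'.1.succ, p'.2))
        = bigM ((T.submatrix Fin.succ Fin.succ).map φ) := by
      ext ⟨i, k⟩ ⟨j, l⟩; rfl
    rw [hB, hA, hD, Matrix.det_fromBlocks_zero₁₂,
      ih φ (T.submatrix Fin.succ Fin.succ) (fun i j hij => hT _ _ (Fin.succ_lt_succ_iff.mpr hij)),
      Fin.prod_univ_succ]
    rfl
/-- The clearing matrix. -/
def Bmat {A : Type*} [CommRing A] {m : ℕ} (M' : Matrix (Fin (m + 1)) (Fin (m + 1)) A) :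
    Matrix (Fin (m + 1)) (Fin (m + 1)) A :=
  Matrix.of fun i j => if j = 0 then (if i = 0 then 1 else -(M' i 0))
    else if i = j then M' 0 0 else 0

section Bmat

variable {A : Type*} [CommRing A] {m : ℕ} (M' : Matrix (Fin (m + 1)) (Fin (m + 1)) A)

lemma Bmat_lower : ∀ i j : Fin (m + 1), i < j → Bmat M' i j = 0 := by
  intro i j hij
  have hj : j ≠ 0 := (ne_of_lt (lt_of_le_of_lt (Fin.zero_le i) hij)).symm
  have hij' : i ≠ j := ne_of_lt hij
  simp [Bmat, hj, hij']

lemma Bmat_det : (Bmat M').det = M' 0 0 ^ m := by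
  have ht : (Bmat M').BlockTriangular OrderDual.toDual := fun i j h => Bmat_lower M' i j h
  rw [Matrix.det_of_lowerTriangular _ ht, Fin.prod_univ_succ]
  simp [Bmat, Fin.succ_ne_zero]

lemma Bmat_mul_col0 : ∀ i : Fin (m + 1), i ≠ 0 → (Bmat M' * M') i 0 = 0 := by
  intro i hi
  rw [Matrix.mul_apply]
  have hterm : ∀ k : Fin (m + 1), Bmat M' i k * M' k 0 =
      (if k = 0 then -(M' i 0) * M' 0 0 else 0) + (if k = i then M' 0 0 * M' i 0 else 0) := by
    intro k
    by_cases hk0 : k = 0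
    · subst hk0
      simp [Bmat, hi, (Ne.symm hi)]
    · by_cases hki : k = i
      · subst hki
        simp [Bmat, hk0, hi]
      · simp [Bmat, hk0, hki, Ne.symm hki]
  rw [Finset.sum_congr rfl fun k _ => hterm k, Finset.sum_add_distrib]
  simp only [Finset.sum_ite_eq', Finset.mem_univ, if_true]
  ring

lemma Bmat_mul_row0 : ∀ j : Fin (m + 1), (Bmat M' * M') 0 j = M' 0 j := by
  intro j
  rw [Matrix.mul_apply, Finset.sum_eq_single 0]
  · simp [Bmat]
  · intro b _ hb
    simp [Bmat, hb, Ne.symm hb]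
  · simp

lemma Bmat_det_eq₁ : (Bmat M' * M').det = M' 0 0 ^ m * M'.det := by
  rw [Matrix.det_mul, Bmat_det]

lemma Bmat_det_eq₂ :
    (Bmat M' * M').det = M' 0 0 * ((Bmat M' * M').submatrix Fin.succ Fin.succ).det := by
  rw [Matrix.det_succ_column_zero, Finset.sum_eq_single 0]
  · rw [Bmat_mul_row0]
    simp [Fin.succAbove_zero]
  · intro i _ hi
    rw [Bmat_mul_col0 M' i hi]
    ring
  · simp

end Bmat

section BmatBig

variable {R : Type*} [CommRing R] {n : Type*} [Fintype n] [DecidableEq n]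
variable {A : Type*} [CommRing A] {m : ℕ} (φ : A →+* Matrix n n R)
variable (M' : Matrix (Fin (m + 1)) (Fin (m + 1)) A)

lemma detBig_eq₁ : (bigM ((Bmat M' * M').map φ)).det
    = (φ (M' 0 0)).det ^ m * (bigM (M'.map φ)).det := by
  have hmul : (Bmat M' * M').map φ = (Bmat M').map φ * M'.map φ := by
    simp [← RingHom.mapMatrix_apply, _root_.map_mul]
  rw [hmul, bigM_mul, Matrix.det_mul,
    det_bigM_lowerTriangular _ φ (Bmat M') (Bmat_lower M'), Fin.prod_univ_succ]
  have h0 : Bmat M' 0 0 = 1 := by simp [Bmat]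
  have hs : ∀ i : Fin m, Bmat M' i.succ i.succ = M' 0 0 := by
    intro i; simp [Bmat, Fin.succ_ne_zero]
  simp [h0, hs]

lemma detBig_eq₂ : (bigM ((Bmat M' * M').map φ)).det
    = (φ (M' 0 0)).det *
      (bigM (((Bmat M' * M').submatrix Fin.succ Fin.succ).map φ)).det := by
  rw [det_eq_fromBlocks (bigM ((Bmat M' * M').map φ))]
  have hC : (Matrix.of fun (p : Fin m × n) (l : n) =>
      (bigM ((Bmat M' * M').map φ)) (p.1.succ, p.2) (0, l)) = 0 := by
    ext ⟨i, k⟩ l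
    show φ ((Bmat M' * M') i.succ 0) k l = 0
    rw [Bmat_mul_col0 M' i.succ (Fin.succ_ne_zero i), map_zero]
    simp
  have hA : (Matrix.of fun (k l : n) => (bigM ((Bmat M' * M').map φ)) (0, k) (0, l))
      = φ ((Bmat M' * M') 0 0) := by
    ext k l; rfl
  have hD : (Matrix.of fun (p p' : Fin m × n) =>
      (bigM ((Bmat M' * M').map φ)) (p.1.succ, p.2) (p'.1.succ, p'.2))
      = bigM (((Bmat M' * M').submatrix Fin.succ Fin.succ).map φ) := by
    ext ⟨i, k⟩ ⟨j, l⟩; rfl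
  rw [hC, hA, hD, Matrix.det_fromBlocks_zero₂₁, Bmat_mul_row0]
end BmatBig

section Key

/-- The polynomial-perturbed matrix. -/
noncomputable def Mpoly {A : Type*} [CommRing A] {m : ℕ} (M : Matrix (Fin (m + 1)) (Fin (m + 1)) A) :
    Matrix (Fin (m + 1)) (Fin (m + 1)) (Polynomial A) :=
  Matrix.of fun i j => Polynomial.C (M i j) + if i = 0 ∧ j = 0 then Polynomial.X else 0

lemma Mpoly_00 {A : Type*} [CommRing A] {m : ℕ} (M : Matrix (Fin (m + 1)) (Fin (m + 1)) A) :
    Mpoly M 0 0 = Polynomial.C (M 0 0) + Polynomial.X := by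
  simp [Mpoly]

lemma Mpoly_map_eval {A : Type*} [CommRing A] {m : ℕ}
    (M : Matrix (Fin (m + 1)) (Fin (m + 1)) A) :
    (Mpoly M).map (Polynomial.evalRingHom (0 : A)) = M := by
  ext i j
  simp only [Matrix.map_apply, Mpoly, Matrix.of_apply, map_add]
  split <;> simp

variable {R : Type*} [CommRing R] [IsDomain R] {n : Type*} [Fintype n] [DecidableEq n]

/-- The lifted ring hom `A[X] →+* Matrix n n R[X]`. -/
noncomputable def ψhom {A : Type*} [CommRing A] (φ : A →+* Matrix n n R) :
    Polynomial A →+* Matrix n n (Polynomial R) :=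
  Polynomial.eval₂RingHom' ((Polynomial.C (R := R)).mapMatrix.comp φ)
    (Matrix.scalar n Polynomial.X)
    (fun a => (Matrix.scalar_commute Polynomial.X (fun r => Commute.all _ r) _).symm)

lemma ψhom_C {A : Type*} [CommRing A] (φ : A →+* Matrix n n R) (a : A) :
    ψhom φ (Polynomial.C a) = (φ a).map Polynomial.C := by
  show Polynomial.eval₂ _ _ (Polynomial.C a) = _
  rw [Polynomial.eval₂_C]
  rfl

lemma ψhom_X {A : Type*} [CommRing A] (φ : A →+* Matrix n n R) :
    ψhom φ Polynomial.X = Matrix.scalar n Polynomial.X := by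
  show Polynomial.eval₂ _ _ Polynomial.X = _
  rw [Polynomial.eval₂_X]

lemma ψhom_eval {A : Type*} [CommRing A] (φ : A →+* Matrix n n R) (p : Polynomial A) :
    (ψhom φ p).map (Polynomial.evalRingHom (0 : R)) = φ (Polynomial.evalRingHom (0 : A) p) := by
  have key : ((Polynomial.evalRingHom (0 : R)).mapMatrix.comp (ψhom φ))
      = φ.comp (Polynomial.evalRingHom (0 : A)) := by
    apply Polynomial.ringHom_ext
    · intro a
      ext k l
      simp [RingHom.comp_apply, RingHom.mapMatrix_apply, ψhom_C, Matrix.map_apply]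
    · simp only [RingHom.comp_apply, ψhom_X, RingHom.mapMatrix_apply, Polynomial.coe_evalRingHom,
        Polynomial.eval_X, map_zero]
      rw [Matrix.scalar_apply, Matrix.diagonal_map (by simp)]
      simp
  have := DFunLike.congr_fun key p
  simpa using this

lemma ψhom_00_det_ne_zero {A : Type*} [CommRing A] (φ : A →+* Matrix n n R) {m : ℕ}
    (M : Matrix (Fin (m + 1)) (Fin (m + 1)) A) :
    (ψhom φ (Mpoly M 0 0)).det ≠ 0 := by
  have h : ψhom φ (Mpoly M 0 0) = Matrix.charmatrix (-(φ (M 0 0))) := by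
    rw [Mpoly_00, map_add, ψhom_C, ψhom_X, Matrix.charmatrix]
    rw [map_neg, RingHom.mapMatrix_apply, sub_neg_eq_add, add_comm]
  rw [h]
  exact (Matrix.charpoly_monic _).ne_zero

lemma key : ∀ (m : ℕ) {R : Type u_1} [CommRing R] [IsDomain R]
    {n : Type u_2} [Fintype n] [DecidableEq n] {A : Type u_3} [CommRing A]
    (φ : A →+* Matrix n n R) (M : Matrix (Fin m) (Fin m) A),
    (bigM (M.map φ)).det = (φ M.det).det := by
  intro m
  induction m with
  | zero =>
    intro R _ _ n _ _ A _ φ M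
    simp [Matrix.det_isEmpty]
  | succ m ih =>
    intro R _ _ n _ _ A _ φ M
    set ψ := ψhom (n := n) φ with hψdef
    set M' := Mpoly M with hM'def
    -- the scalar identity
    have hscalar : M' 0 0 * ((Bmat M' * M').submatrix Fin.succ Fin.succ).det
        = M' 0 0 ^ m * M'.det := by
      rw [← Bmat_det_eq₂, Bmat_det_eq₁]
    -- the big identity
    have hbig : (ψ (M' 0 0)).det ^ m * (bigM (M'.map ψ)).det
        = (ψ (M' 0 0)).det ^ m * (ψ M'.det).det := by
      rw [← detBig_eq₁, detBig_eq₂, ih ψ ((Bmat M' * M').submatrix Fin.succ Fin.succ),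
        ← Matrix.det_mul, ← _root_.map_mul, hscalar, _root_.map_mul, map_pow,
        Matrix.det_mul, Matrix.det_pow]
    have hkeyX : (bigM (M'.map ψ)).det = (ψ M'.det).det :=
      mul_left_cancel₀ (pow_ne_zero m (ψhom_00_det_ne_zero φ M)) hbig
    -- evaluate at 0
    have hfin := congrArg (Polynomial.evalRingHom (0 : R)) hkeyX
    rw [RingHom.map_det, RingHom.map_det, RingHom.mapMatrix_apply, RingHom.mapMatrix_apply] at hfin
    have hL : (bigM (M'.map ψ)).map (Polynomial.evalRingHom (0 : R)) = bigM (M.map φ) := by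
      ext ⟨i, k⟩ ⟨j, l⟩
      show (Polynomial.evalRingHom (0 : R)) (ψ (M' i j) k l) = φ (M i j) k l
      have h1 : (ψ (M' i j)).map (Polynomial.evalRingHom (0 : R))
          = φ (Polynomial.evalRingHom (0 : A) (M' i j)) := ψhom_eval φ (M' i j)
      have h2 : Polynomial.evalRingHom (0 : A) (M' i j) = M i j := by
        have := congrFun (congrFun (Mpoly_map_eval M) i) j
        exact this
      calc (Polynomial.evalRingHom (0 : R)) (ψ (M' i j) k l)
          = ((ψ (M' i j)).map (Polynomial.evalRingHom (0 : R))) k l := rfl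
        _ = φ (M i j) k l := by rw [h1, h2]
    have hR : (ψ M'.det).map (Polynomial.evalRingHom (0 : R)) = φ M.det := by
      rw [ψhom_eval φ M'.det, RingHom.map_det, RingHom.mapMatrix_apply, hM'def, Mpoly_map_eval M]
    rw [hL, hR] at hfin
    exact hfin

lemma key' {R : Type*} [CommRing R] [IsDomain R] {n : Type*} [Fintype n] [DecidableEq n]
    {A : Type*} [CommRing A] (φ : A →+* Matrix n n R) {I : Type*} [Fintype I] [DecidableEq I]
    (M : Matrix I I A) :
    (bigM (M.map φ)).det = (φ M.det).det := by
  let e : I ≃ Fin (Fintype.card I) := Fintype.equivFin I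
  have h1 : M.det = (M.submatrix e.symm e.symm).det :=
    (Matrix.det_submatrix_equiv_self e.symm M).symm
  have h2 : bigM (M.map φ) = (bigM ((M.submatrix e.symm e.symm).map φ)).submatrix
      (Equiv.prodCongr e (Equiv.refl n)) (Equiv.prodCongr e (Equiv.refl n)) := by
    ext ⟨i, k⟩ ⟨j, l⟩
    simp [bigM_apply, Matrix.submatrix_apply]
  rw [h2, Matrix.det_submatrix_equiv_self, key _ φ _, h1]

end Key


/-- The regular representation of the group algebra, as a ring hom to matrices. -/
noncomputable def convHom (Γ : Type*) [CommGroup Γ] [Fintype Γ] [DecidableEq Γ] :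
    MonoidAlgebra ℤ Γ →+* Matrix Γ Γ ℤ :=
  (Algebra.leftMulMatrix (MonoidAlgebra.basis Γ ℤ)).toRingHom

lemma convHom_apply {Γ : Type*} [CommGroup Γ] [Fintype Γ] [DecidableEq Γ]
    (a : MonoidAlgebra ℤ Γ) (g g' : Γ) : convHom Γ a g g' = a.coeff (g * g'⁻¹) := by
  show Algebra.leftMulMatrix _ a g g' = _
  rw [Algebra.leftMulMatrix_eq_repr_mul]
  show (a * MonoidAlgebra.single g' (1:ℤ)).coeff g = _
  rw [MonoidAlgebra.coeff_mul_single_apply, mul_one]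

end GDaux

open GDaux in
/-- For a finite abelian group `G` and a subgroup `H`, `S(G) ⊆ S(H)`. -/
theorem integerGroupDet_subset_of_subgroup {G : Type*} [CommGroup G] [Fintype G]
    (H : Subgroup G) :
    {z : ℤ | ∃ x : G → ℤ, groupDet G x = z} ⊆
      {z : ℤ | ∃ x : H → ℤ, groupDet H x = z} := by
  rintro z ⟨x, hx⟩
  let σ : G ⧸ H → G := Quotient.out
  have hσ : ∀ q : G ⧸ H, (QuotientGroup.mk (σ q) : G ⧸ H) = q := fun q => QuotientGroup.out_eq' q
  have hbij : Function.Bijective (fun p : (G ⧸ H) × H => σ p.1 * (p.2 : G)) := by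
    constructor
    · rintro ⟨q, h⟩ ⟨q', h'⟩ hEq
      simp only at hEq
      have h1 : q = q' := by
        have h0 := congrArg (QuotientGroup.mk (s := H)) hEq
        rwa [QuotientGroup.mk_mul_of_mem _ h.2, QuotientGroup.mk_mul_of_mem _ h'.2,
          hσ, hσ] at h0
      subst h1
      have h2 : (h : G) = h' := mul_left_cancel hEq
      exact Prod.ext rfl (Subtype.ext h2)
    · intro g
      refine ⟨⟨QuotientGroup.mk g, ⟨(σ (QuotientGroup.mk g))⁻¹ * g, ?_⟩⟩, ?_⟩
      · exact QuotientGroup.eq.mp (hσ (QuotientGroup.mk g))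
      · exact mul_inv_cancel_left _ g
  let e : (G ⧸ H) × H ≃ G := Equiv.ofBijective _ hbij
  have he : ∀ p : (G ⧸ H) × H, e p = σ p.1 * (p.2 : G) := fun p => rfl
  let Mmat : Matrix (G ⧸ H) (G ⧸ H) (MonoidAlgebra ℤ ↥H) := Matrix.of fun q q' =>
    MonoidAlgebra.ofCoeff <| Finsupp.equivFunOnFinite.symm fun h : ↥H => x (σ q * (σ q')⁻¹ * (h : G))
  have hMmat : ∀ (q q' : G ⧸ H) (h : ↥H), (Mmat q q').coeff h = x (σ q * (σ q')⁻¹ * (h : G)) := by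
    intro q q' h
    show (MonoidAlgebra.ofCoeff (Finsupp.equivFunOnFinite.symm fun h : ↥H => x (σ q * (σ q')⁻¹ * (h : G)))).coeff h = _
    simp
  have hbigeq : (Matrix.of fun g g' : G => x (g * g'⁻¹)).submatrix e e
      = bigM (Mmat.map (convHom ↥H)) := by
    ext ⟨q, h⟩ ⟨q', h'⟩
    show x (e (q, h) * (e (q', h'))⁻¹) = convHom ↥H (Mmat q q') h h'
    rw [he, he, convHom_apply, hMmat]
    congr 1
    push_cast
    rw [mul_inv, mul_mul_mul_comm]
  have hdet1 : groupDet G x = (bigM (Mmat.map (convHom ↥H))).det := by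
    rw [groupDet, ← Matrix.det_submatrix_equiv_self e, hbigeq]
  have hdet2 : (bigM (Mmat.map (convHom ↥H))).det = (convHom ↥H Mmat.det).det :=
    key' (convHom ↥H) Mmat
  refine ⟨fun h => Mmat.det.coeff h, ?_⟩
  have hfinal : (Matrix.of fun h h' : ↥H => Mmat.det.coeff (h * h'⁻¹)) = convHom ↥H Mmat.det := by
    ext h h'
    rw [convHom_apply]
    rfl
  rw [← hx, hdet1, hdet2, groupDet, hfinal]
  congr 1
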